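/- Let 0 < β < 1, θ > 0 with 2/θ + β < 1, let F: (0,∞) → [0,1] satisfy c₁exp(-C₁y^{-θ}) ≤ F(y) ≤ C exp(-C₂y^{-θ}) for y ∈ (0,1] and F(y) → 1 as y → ∞, and let M_β be the M-Wright density. Then for all ε ∈ [0,1], 2ε²∫₀^∞ F(y) M_β(ε²/y²) y^{-3} dy = 2 Σ_{n≥0} (-1)^n η_{2n+2} ε^{2n+2} / ((2n+2) n! Γ(1-β-βn)), where η_k = k∫₀^∞ y^{-k-1}F(y)dy, and the series converges absolutely. -/

import Mathlib

open MeasureTheory Real Filter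

section SmallBallAux
open Set MeasureTheory Real Filter

lemma gamma_interp {x t : ℝ} (hx : 1 ≤ x) (ht0 : 0 ≤ t) (ht1 : t ≤ 1) :
    Real.Gamma (x + t) ≤ Real.Gamma x * x ^ t := by
  have hx0 : (0:ℝ) < x := lt_of_lt_of_le one_pos hx
  have hΓx : 0 < Real.Gamma x := Real.Gamma_pos_of_pos hx0
  have hΓx1 : 0 < Real.Gamma (x + 1) := Real.Gamma_pos_of_pos (by linarith)
  have hconv := Real.convexOn_log_Gamma.2 (mem_Ioi.2 hx0) (mem_Ioi.2 (by linarith : (0:ℝ) < x + 1))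
    (by linarith : (0:ℝ) ≤ 1 - t) ht0 (by ring)
  rw [smul_eq_mul, smul_eq_mul, smul_eq_mul, smul_eq_mul,
    show (1 - t) * x + t * (x + 1) = x + t by ring] at hconv
  have hxt : 0 < x + t := by linarith
  have hΓxt : 0 < Real.Gamma (x + t) := Real.Gamma_pos_of_pos hxt
  have := Real.exp_le_exp.2 hconv
  simp only [Function.comp] at this
  rw [Real.exp_log hΓxt] at this
  calc Real.Gamma (x + t) ≤ Real.exp ((1 - t) * Real.log (Real.Gamma x)
        + t * Real.log (Real.Gamma (x + 1))) := this
    _ = Real.Gamma x ^ (1 - t) * Real.Gamma (x + 1) ^ t := by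
        rw [Real.exp_add, ← Real.log_rpow hΓx, ← Real.log_rpow hΓx1,
          Real.exp_log (Real.rpow_pos_of_pos hΓx _),
          Real.exp_log (Real.rpow_pos_of_pos hΓx1 _)]
    _ = Real.Gamma x * x ^ t := by
        rw [Real.Gamma_add_one (ne_of_gt hx0), Real.mul_rpow (le_of_lt hx0) hΓx.le,
          show Real.Gamma x ^ (1-t) * (x ^ t * Real.Gamma x ^ t)
            = (Real.Gamma x ^ (1-t) * Real.Gamma x ^ t) * x ^ t by ring,
          ← Real.rpow_add hΓx]
        norm_num

lemma gamma_add_nat_le {x : ℝ} (hx : 1 ≤ x) (N : ℕ) :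
    Real.Gamma (x + N) ≤ Real.Gamma x * (x + N) ^ N := by
  have hx0 : (0:ℝ) < x := lt_of_lt_of_le one_pos hx
  induction N with
  | zero => simp
  | succ n ih =>
    have h1 : (0:ℝ) < x + n := by positivity
    have : Real.Gamma (x + (n+1:ℕ)) = (x + n) * Real.Gamma (x + n) := by
      push_cast
      rw [show x + ((n:ℝ)+1) = (x + n) + 1 by ring, Real.Gamma_add_one (ne_of_gt h1)]
    rw [this]
    calc (x + n) * Real.Gamma (x + n) ≤ (x + n) * (Real.Gamma x * (x + n) ^ n) :=
          mul_le_mul_of_nonneg_left ih h1.le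
      _ = Real.Gamma x * ((x + n) ^ (n+1)) := by ring
      _ ≤ Real.Gamma x * ((x + (n+1:ℕ)) ^ (n+1)) := by
          apply mul_le_mul_of_nonneg_left _ (Real.Gamma_pos_of_pos hx0).le
          apply pow_le_pow_left₀ h1.le
          push_cast; linarith

lemma gamma_add_le {x a : ℝ} (hx : 1 ≤ x) (ha : 0 ≤ a) :
    Real.Gamma (x + a) ≤ Real.Gamma x * (x + a) ^ a := by
  have hx0 : (0:ℝ) < x := lt_of_lt_of_le one_pos hx
  set N : ℕ := ⌊a⌋₊ with hN
  have hNa : (N:ℝ) ≤ a := Nat.floor_le ha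
  have hr0 : (0:ℝ) ≤ a - N := by linarith
  have hr1 : a - N ≤ 1 := by
    have := Nat.lt_floor_add_one a
    linarith
  have hxN : (1:ℝ) ≤ x + N := by
    have : (0:ℝ) ≤ N := Nat.cast_nonneg N
    linarith
  have key : Real.Gamma (x + a) ≤ Real.Gamma (x + N) * (x + N) ^ (a - N) := by
    have := gamma_interp hxN hr0 hr1
    rwa [show x + (N:ℝ) + (a - N) = x + a by ring] at this
  have h2 : Real.Gamma (x + N) * (x + N) ^ (a - N)
      ≤ (Real.Gamma x * (x + N) ^ N) * (x + N) ^ (a - N) := by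
    apply mul_le_mul_of_nonneg_right (gamma_add_nat_le hx N)
    positivity
  have h3 : (Real.Gamma x * (x + N) ^ N) * (x + N) ^ (a - N)
      = Real.Gamma x * (x + N) ^ a := by
    rw [mul_assoc, ← Real.rpow_natCast (x + (N:ℝ)) N, ← Real.rpow_add (by linarith : (0:ℝ) < x + N)]
    ring_nf
  have h4 : (x + (N:ℝ)) ^ a ≤ (x + a) ^ a :=
    Real.rpow_le_rpow (by linarith) (by linarith) ha
  calc Real.Gamma (x + a) ≤ (Real.Gamma x * (x + N) ^ N) * (x + N) ^ (a - N) := key.trans h2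
    _ = Real.Gamma x * (x + N) ^ a := h3
    _ ≤ Real.Gamma x * (x + a) ^ a :=
        mul_le_mul_of_nonneg_left h4 (Real.Gamma_pos_of_pos hx0).le

lemma gamma_mono {x y : ℝ} (hx : 2 ≤ x) (hxy : x ≤ y) :
    Real.Gamma x ≤ Real.Gamma y :=
  Real.Gamma_strictMonoOn_Ici.monotoneOn (mem_Ici.2 hx) (mem_Ici.2 (hx.trans hxy)) hxy

lemma recip_gamma_reflect {s : ℝ} (hs : 0 < s) (h : Real.Gamma (1 - s) ≠ 0) :
    |(Real.Gamma (1 - s))⁻¹| ≤ Real.Gamma s / π := by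
  have hΓs : 0 < Real.Gamma s := Real.Gamma_pos_of_pos hs
  have hrefl := Real.Gamma_mul_Gamma_one_sub s
  have hsin : Real.sin (π * s) ≠ 0 := by
    intro h0
    rw [h0, div_zero] at hrefl
    exact (mul_ne_zero (ne_of_gt hΓs) h) hrefl
  have hG : Real.Gamma (1 - s) = π / (Real.sin (π * s) * Real.Gamma s) := by
    field_simp at hrefl ⊢
    linarith [hrefl]
  rw [hG]
  rw [abs_inv, abs_div, abs_of_pos Real.pi_pos, inv_div, abs_mul, abs_of_pos hΓs]
  rw [div_le_div_iff₀ Real.pi_pos Real.pi_pos]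
  have h1 : |Real.sin (π * s)| ≤ 1 := abs_sin_le_one _
  calc |Real.sin (π * s)| * Real.Gamma s * π ≤ 1 * Real.Gamma s * π := by
        apply mul_le_mul_of_nonneg_right (mul_le_mul_of_nonneg_right h1 hΓs.le) Real.pi_pos.le
    _ = Real.Gamma s * π := by ring

lemma summable_majorant {A a a' b b' : ℝ} (hA : 0 < A) (ha : 0 < a) (ha' : 0 < a')
    (hsum : a + a' < 1) (hb : 1 ≤ b) (hb' : 0 < b') :
    Summable (fun n : ℕ => A ^ n * Real.Gamma (a * n + b) * Real.Gamma (a' * n + b')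
      / n.factorial) := by
  set f : ℕ → ℝ := fun n => A ^ n * Real.Gamma (a * n + b) * Real.Gamma (a' * n + b')
      / n.factorial with hf
  set K : ℝ := a + b + a' + b' with hK
  have hK0 : 0 < K := by positivity
  set s : ℕ → ℝ := fun n => A * K ^ (a + a') * ((n : ℝ) + 1) ^ (a + a' - 1) with hs
  have hslim : Filter.Tendsto s Filter.atTop (nhds 0) := by
    have h1 : Filter.Tendsto (fun n : ℕ => ((n : ℝ) + 1)) Filter.atTop Filter.atTop :=
      Filter.tendsto_atTop_add_const_right _ 1 tendsto_natCast_atTop_atTop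
    have h2 : Filter.Tendsto (fun x : ℝ => x ^ (a + a' - 1)) Filter.atTop (nhds 0) := by
      have := tendsto_rpow_neg_atTop (by linarith : (0:ℝ) < 1 - (a + a'))
      simpa [show -(1 - (a + a')) = a + a' - 1 by ring] using this
    have := (h2.comp h1).const_mul (A * K ^ (a + a'))
    simpa [hs, mul_assoc, Function.comp] using this
  have hratio : ∀ᶠ n in Filter.atTop, ‖f (n + 1)‖ ≤ s n * ‖f n‖ := by
    have hev : ∀ᶠ n : ℕ in Filter.atTop, (1:ℝ) ≤ a' * n + b' := by
      have : Filter.Tendsto (fun n : ℕ => a' * n + b') Filter.atTop Filter.atTop := by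
        apply Filter.tendsto_atTop_add_const_right
        exact Filter.Tendsto.const_mul_atTop ha' tendsto_natCast_atTop_atTop
      exact this.eventually_ge_atTop 1
    filter_upwards [hev] with n hn
    have hx1 : (1:ℝ) ≤ a * n + b := by nlinarith [Nat.cast_nonneg (α := ℝ) n]
    have hΓ1 : 0 < Real.Gamma (a * n + b) := Real.Gamma_pos_of_pos (by linarith)
    have hΓ2 : 0 < Real.Gamma (a' * n + b') := Real.Gamma_pos_of_pos (by linarith)
    have hfn : 0 < f n := by
      apply div_pos (by positivity)
      exact_mod_cast Nat.cast_pos.2 n.factorial_pos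
    have hfn1 : 0 ≤ f (n + 1) := by
      apply div_nonneg _ (Nat.cast_nonneg _)
      have := Real.Gamma_pos_of_pos (show (0:ℝ) < a * (n+1:ℕ) + b by push_cast; nlinarith [Nat.cast_nonneg (α := ℝ) n])
      have := Real.Gamma_pos_of_pos (show (0:ℝ) < a' * (n+1:ℕ) + b' by push_cast; nlinarith [Nat.cast_nonneg (α := ℝ) n])
      positivity
    rw [Real.norm_of_nonneg hfn1, Real.norm_of_nonneg hfn.le]
    have hg1 : Real.Gamma (a * (n+1:ℕ) + b)
        ≤ Real.Gamma (a * n + b) * (K * ((n:ℝ)+1)) ^ a := by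
      have h := gamma_add_le hx1 ha.le
      have he : a * ((n:ℕ):ℝ) + b + a = a * ((n+1:ℕ):ℝ) + b := by push_cast; ring
      rw [he] at h
      refine h.trans (mul_le_mul_of_nonneg_left ?_ hΓ1.le)
      apply Real.rpow_le_rpow (by positivity) _ ha.le
      rw [← he]; push_cast
      nlinarith [Nat.cast_nonneg (α := ℝ) n, ha'.le, hb'.le]
    have hg2 : Real.Gamma (a' * (n+1:ℕ) + b')
        ≤ Real.Gamma (a' * n + b') * (K * ((n:ℝ)+1)) ^ a' := by
      have h := gamma_add_le hn ha'.le
      have he : a' * ((n:ℕ):ℝ) + b' + a' = a' * ((n+1:ℕ):ℝ) + b' := by push_cast; ring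
      rw [he] at h
      refine h.trans (mul_le_mul_of_nonneg_left ?_ hΓ2.le)
      apply Real.rpow_le_rpow (by positivity) _ ha'.le
      rw [← he]; push_cast
      nlinarith [Nat.cast_nonneg (α := ℝ) n, ha.le, hb]
    have hfact : ((n+1:ℕ).factorial : ℝ) = ((n:ℝ) + 1) * (n.factorial : ℝ) := by
      rw [Nat.factorial_succ]; push_cast; ring
    have hn1 : (0:ℝ) < (n:ℝ) + 1 := by positivity
    have hnf : (0:ℝ) < (n.factorial : ℝ) := by exact_mod_cast n.factorial_pos
    have hrw : s n * f n = A ^ (n+1) * (Real.Gamma (a * n + b) * (K * ((n:ℝ)+1)) ^ a)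
        * (Real.Gamma (a' * n + b') * (K * ((n:ℝ)+1)) ^ a') / ((n+1:ℕ).factorial : ℝ) := by
      rw [hfact, hs, hf]
      simp only []
      rw [Real.mul_rpow hK0.le hn1.le, Real.mul_rpow hK0.le hn1.le,
        Real.rpow_add hK0, show a + a' - 1 = a + (a' + (-1)) by ring,
        Real.rpow_add hn1, Real.rpow_add hn1, Real.rpow_neg_one]
      field_simp
      ring
    rw [hrw, hf]
    simp only []
    gcongr ?_ / _
    calc A ^ (n+1) * Real.Gamma (a * ↑(n+1) + b) * Real.Gamma (a' * ↑(n+1) + b')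
        ≤ A ^ (n+1) * (Real.Gamma (a * n + b) * (K * ((n:ℝ)+1)) ^ a)
          * Real.Gamma (a' * ↑(n+1) + b') := by
          apply mul_le_mul_of_nonneg_right (mul_le_mul_of_nonneg_left hg1 (by positivity))
          exact (Real.Gamma_pos_of_pos (by push_cast; nlinarith [Nat.cast_nonneg (α := ℝ) n])).le
      _ ≤ A ^ (n+1) * (Real.Gamma (a * n + b) * (K * ((n:ℝ)+1)) ^ a)
          * (Real.Gamma (a' * n + b') * (K * ((n:ℝ)+1)) ^ a') := by
          apply mul_le_mul_of_nonneg_left hg2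
          positivity
  have hhalf : ∀ᶠ n in Filter.atTop, s n ≤ 1/2 := by
    have := hslim.eventually_le_const (show (0:ℝ) < 1/2 by norm_num)
    exact this
  apply summable_of_ratio_norm_eventually_le (show (1:ℝ)/2 < 1 by norm_num)
  filter_upwards [hratio, hhalf] with n h1 h2
  calc ‖f (n+1)‖ ≤ s n * ‖f n‖ := h1
    _ ≤ 1/2 * ‖f n‖ := mul_le_mul_of_nonneg_right h2 (norm_nonneg _)


lemma integralJ {θ C C₂ : ℝ} (hθ : 0 < θ) (hC : 0 < C) (hC₂ : 0 < C₂)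
    {F : ℝ → ℝ} (hFm : Measurable F) (hF0 : ∀ y, 0 ≤ F y) (hF1 : ∀ y, F y ≤ 1)
    (hFub : ∀ y : ℝ, 0 < y → y ≤ 1 → F y ≤ C * Real.exp (-C₂ * y ^ (-θ)))
    (k : ℕ) (hk : 1 ≤ k) :
    IntegrableOn (fun y => y ^ (-(k:ℝ) - 1) * F y) (Set.Ioi 0) ∧
    (∫ y in Set.Ioi (0:ℝ), y ^ (-(k:ℝ) - 1) * F y)
      ≤ C * ((⌈((k:ℝ)+1)/θ⌉₊.factorial : ℝ) * C₂⁻¹ ^ (⌈((k:ℝ)+1)/θ⌉₊)) + 1 := by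
  set m : ℕ := ⌈((k:ℝ)+1)/θ⌉₊ with hm
  set B : ℝ := C * ((m.factorial : ℝ) * C₂⁻¹ ^ m) with hB
  have hB0 : 0 ≤ B := by positivity
  set f : ℝ → ℝ := fun y => y ^ (-(k:ℝ) - 1) * F y with hf
  have hfmeas : Measurable f := by
    apply Measurable.mul _ hFm
    fun_prop
  -- pointwise bound on Ioc 0 1
  have hbd : ∀ y : ℝ, y ∈ Set.Ioc (0:ℝ) 1 → f y ≤ B := by
    rintro y ⟨hy0, hy1⟩
    have hyk : (0:ℝ) < y ^ (-(k:ℝ) - 1) := Real.rpow_pos_of_pos hy0 _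
    have h1 : f y ≤ y ^ (-(k:ℝ) - 1) * (C * Real.exp (-C₂ * y ^ (-θ))) :=
      mul_le_mul_of_nonneg_left (hFub y hy0 hy1) hyk.le
    have ht0 : (0:ℝ) < y ^ (-θ) := Real.rpow_pos_of_pos hy0 _
    have hexp : Real.exp (-C₂ * y ^ (-θ))
        ≤ (m.factorial : ℝ) * C₂⁻¹ ^ m * (y ^ (-θ))⁻¹ ^ m := by
      have hkey : (C₂ * y ^ (-θ)) ^ m / (m.factorial : ℝ) ≤ Real.exp (C₂ * y ^ (-θ)) :=
        Real.pow_div_factorial_le_exp (x := C₂ * y ^ (-θ)) (by positivity) m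
      have hpos : 0 < (C₂ * y ^ (-θ)) ^ m / (m.factorial : ℝ) := by positivity
      have hinv := inv_anti₀ hpos hkey
      rw [← Real.exp_neg] at hinv
      calc Real.exp (-C₂ * y ^ (-θ)) = Real.exp (-(C₂ * y ^ (-θ))) := by rw [neg_mul]
        _ ≤ ((C₂ * y ^ (-θ)) ^ m / (m.factorial : ℝ))⁻¹ := hinv
        _ = (m.factorial : ℝ) * C₂⁻¹ ^ m * (y ^ (-θ))⁻¹ ^ m := by
            rw [mul_pow]
            simp only [div_eq_mul_inv, mul_inv, inv_pow, inv_inv]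
            ring
    have h2 : f y ≤ C * ((m.factorial : ℝ) * C₂⁻¹ ^ m) * (y ^ (-(k:ℝ)-1) * (y ^ (-θ))⁻¹ ^ m) := by
      calc f y ≤ y ^ (-(k:ℝ) - 1) * (C * Real.exp (-C₂ * y ^ (-θ))) := h1
        _ ≤ y ^ (-(k:ℝ) - 1) * (C * ((m.factorial : ℝ) * C₂⁻¹ ^ m * (y ^ (-θ))⁻¹ ^ m)) := by
            apply mul_le_mul_of_nonneg_left _ hyk.le
            exact mul_le_mul_of_nonneg_left hexp hC.le
        _ = C * ((m.factorial : ℝ) * C₂⁻¹ ^ m) * (y ^ (-(k:ℝ)-1) * (y ^ (-θ))⁻¹ ^ m) := by ring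
    have h3 : y ^ (-(k:ℝ)-1) * (y ^ (-θ))⁻¹ ^ m ≤ 1 := by
      have e0 : (y ^ (-θ))⁻¹ = y ^ θ := by rw [← Real.rpow_neg hy0.le, neg_neg]
      have e1 : (y ^ (-θ))⁻¹ ^ m = y ^ (θ * m) := by
        rw [e0, ← Real.rpow_natCast (y ^ θ) m, ← Real.rpow_mul hy0.le]
      rw [e1, ← Real.rpow_add hy0]
      apply Real.rpow_le_one hy0.le hy1
      have : ((k:ℝ)+1)/θ ≤ m := Nat.le_ceil _
      rw [div_le_iff₀ hθ] at this
      nlinarith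
    calc f y ≤ C * ((m.factorial : ℝ) * C₂⁻¹ ^ m) * (y ^ (-(k:ℝ)-1) * (y ^ (-θ))⁻¹ ^ m) := h2
      _ ≤ C * ((m.factorial : ℝ) * C₂⁻¹ ^ m) * 1 := by
          apply mul_le_mul_of_nonneg_left h3 (by positivity)
      _ = B := by rw [hB, mul_one]
  have hfnn : ∀ y : ℝ, 0 < y → 0 ≤ f y := fun y hy =>
    mul_nonneg (Real.rpow_pos_of_pos hy _).le (hF0 y)
  -- integrability on Ioc 0 1
  have hint1 : IntegrableOn f (Set.Ioc 0 1) := by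
    apply Integrable.mono' (integrableOn_const (C := B) (by simp [Real.volume_Ioc]))
      hfmeas.aestronglyMeasurable
    · rw [ae_restrict_iff' measurableSet_Ioc]
      filter_upwards with y hy
      rw [Real.norm_of_nonneg (hfnn y hy.1)]
      exact hbd y hy
  -- integrability on Ioi 1
  have hrint : IntegrableOn (fun y : ℝ => y ^ (-(k:ℝ) - 1)) (Set.Ioi 1) := by
    apply integrableOn_Ioi_rpow_of_lt _ one_pos
    have : (1:ℝ) ≤ k := by exact_mod_cast hk
    linarith
  have hint2 : IntegrableOn f (Set.Ioi 1) := by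
    apply Integrable.mono' hrint hfmeas.aestronglyMeasurable
    rw [ae_restrict_iff' measurableSet_Ioi]
    filter_upwards with y hy
    have hy0 : (0:ℝ) < y := lt_trans one_pos hy
    rw [Real.norm_of_nonneg (hfnn y hy0)]
    calc f y ≤ y ^ (-(k:ℝ)-1) * 1 :=
          mul_le_mul_of_nonneg_left (hF1 y) (Real.rpow_pos_of_pos hy0 _).le
      _ = y ^ (-(k:ℝ)-1) := mul_one _
  have hunion : Set.Ioc (0:ℝ) 1 ∪ Set.Ioi 1 = Set.Ioi 0 := Set.Ioc_union_Ioi_eq_Ioi zero_le_one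
  have hint : IntegrableOn f (Set.Ioi 0) := by
    rw [← hunion]; exact hint1.union hint2
  refine ⟨hint, ?_⟩
  rw [← hunion, setIntegral_union (Set.Ioc_disjoint_Ioi le_rfl) measurableSet_Ioi hint1 hint2]
  have hI1 : (∫ y in Set.Ioc (0:ℝ) 1, f y) ≤ B := by
    calc (∫ y in Set.Ioc (0:ℝ) 1, f y) ≤ ∫ _ in Set.Ioc (0:ℝ) 1, B :=
          setIntegral_mono_on hint1 (integrableOn_const (by simp [Real.volume_Ioc]))
            measurableSet_Ioc hbd
      _ = B := by simp [Real.volume_Ioc]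
  have hI2 : (∫ y in Set.Ioi (1:ℝ), f y) ≤ 1 := by
    have hkR : (1:ℝ) ≤ (k:ℝ) := by exact_mod_cast hk
    calc (∫ y in Set.Ioi (1:ℝ), f y) ≤ ∫ y in Set.Ioi (1:ℝ), y ^ (-(k:ℝ)-1) := by
          apply setIntegral_mono_on hint2 hrint measurableSet_Ioi
          intro y hy
          have hy0 : (0:ℝ) < y := lt_trans one_pos hy
          calc f y ≤ y ^ (-(k:ℝ)-1) * 1 :=
                mul_le_mul_of_nonneg_left (hF1 y) (Real.rpow_pos_of_pos hy0 _).le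
            _ = y ^ (-(k:ℝ)-1) := mul_one _
      _ = -(1:ℝ) ^ (-(k:ℝ)-1+1) / (-(k:ℝ)-1+1) := integral_Ioi_rpow_of_lt (by linarith) one_pos
      _ = 1 / (k:ℝ) := by
          rw [Real.one_rpow]
          have : -(k:ℝ)-1+1 = -(k:ℝ) := by ring
          rw [this]
          field_simp
      _ ≤ 1 := by
          rw [div_le_one (by linarith)]
          exact hkR
  rw [hB] at hI1
  linarith

end SmallBallAux

set_option maxHeartbeats 1000000 in
/-- Series expansion of the small-ball probability: under two-sided exponential
small-ball bounds on the cdf `F` with exponent `θ` satisfying `2/θ + β < 1`,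
`2ε² ∫₀^∞ F(y) M_β(ε²/y²) y^{-3} dy
  = 2 ∑_{n≥0} (-1)^n η_{2n+2} ε^{2n+2} / ((2n+2) n! Γ(1-β-βn))`
for all `ε ∈ [0,1]`, where `M_β` is the M-Wright function,
`η_k = k ∫₀^∞ y^{-k-1} F(y) dy`, and the series converges absolutely. -/
theorem smallBall_series_expansion (β θ c₁ C₁ C C₂ : ℝ)
    (hβ0 : 0 < β) (hβ1 : β < 1) (hθ : 0 < θ) (hθβ : 2 / θ + β < 1)
    (hc₁ : 0 < c₁) (hC₁ : 0 < C₁) (hC : 0 < C) (hC₂ : 0 < C₂)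
    (F : ℝ → ℝ) (hFm : Measurable F) (hF0 : ∀ y, 0 ≤ F y) (hF1 : ∀ y, F y ≤ 1)
    (hFub : ∀ y : ℝ, 0 < y → y ≤ 1 → F y ≤ C * Real.exp (-C₂ * y ^ (-θ)))
    (hFlb : ∀ y : ℝ, 0 < y → y ≤ 1 → c₁ * Real.exp (-C₁ * y ^ (-θ)) ≤ F y)
    (hFinf : Tendsto F atTop (nhds 1))
    (Mβ : ℝ → ℝ)
    (hMβ : ∀ x : ℝ, 0 ≤ x →
      Mβ x = ∑' n : ℕ, (-x) ^ n / ((n.factorial : ℝ) * Real.Gamma (1 - β - β * n)))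
    (η : ℕ → ℝ)
    (hη : ∀ k : ℕ, η k = (k : ℝ) * ∫ y in Set.Ioi (0 : ℝ), y ^ (-(k : ℝ) - 1) * F y) :
    ∀ ε : ℝ, 0 ≤ ε → ε ≤ 1 →
      (2 * ε ^ 2 * ∫ y in Set.Ioi (0 : ℝ), F y * Mβ (ε ^ 2 / y ^ 2) * y ^ (-3 : ℝ)) =
        2 * ∑' n : ℕ, (-1 : ℝ) ^ n * η (2 * n + 2) * ε ^ (2 * n + 2) /
          (((2 * n + 2 : ℕ) : ℝ) * (n.factorial : ℝ) *
            Real.Gamma (1 - β - β * n)) ∧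
      Summable (fun n : ℕ =>
        |(-1 : ℝ) ^ n * η (2 * n + 2) * ε ^ (2 * n + 2) /
          (((2 * n + 2 : ℕ) : ℝ) * (n.factorial : ℝ) *
            Real.Gamma (1 - β - β * n))|) := by
  intro ε hε0 hε1
  have hθ2 : (0:ℝ) < 2/θ := by positivity
  have hβn : ∀ n : ℕ, (0:ℝ) < β * n + β := by
    intro n; have : (0:ℝ) ≤ n := Nat.cast_nonneg n; nlinarith
  set Γn : ℕ → ℝ := fun n => Real.Gamma (1 - β - β * n) with hΓndef
  set c : ℕ → ℝ := fun n => (-1:ℝ)^n * ε^(2*n) / ((n.factorial : ℝ) * Γn n) with hcdef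
  set h : ℕ → ℝ → ℝ := fun n y => y ^ (-((2*n+2:ℕ):ℝ) - 1) * F y with hhdef
  set J : ℕ → ℝ := fun n => ∫ y in Set.Ioi (0:ℝ), h n y with hJdef
  set g : ℕ → ℝ → ℝ := fun n y => c n * h n y with hgdef
  have hIJ := fun n : ℕ => integralJ hθ hC hC₂ hFm hF0 hF1 hFub (2*n+2) (by omega)
  have hJ0 : ∀ n, 0 ≤ J n := by
    intro n
    apply setIntegral_nonneg measurableSet_Ioi
    intro y hy
    exact mul_nonneg (Real.rpow_nonneg (le_of_lt hy) _) (hF0 y)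
  -- majorant setup
  set M : ℝ := max 1 C₂⁻¹ with hMdef
  have hM1 : (1:ℝ) ≤ M := le_max_left _ _
  have hM0 : (0:ℝ) < M := lt_of_lt_of_le one_pos hM1
  set A : ℝ := M ^ (2/θ) with hAdef
  have hA1 : (1:ℝ) ≤ A := by
    rw [hAdef, ← Real.rpow_zero M]
    exact Real.rpow_le_rpow_of_exponent_le hM1 (by positivity)
  have hA0 : (0:ℝ) < A := lt_of_lt_of_le one_pos hA1
  set D : ℝ := M ^ (3/θ + 1) with hDdef
  have hD0 : (0:ℝ) < D := Real.rpow_pos_of_pos hM0 _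
  set b : ℝ := 3/θ + 2 with hbdef
  have hθ3 : (0:ℝ) < 3/θ := by positivity
  have hb2 : (2:ℝ) ≤ b := by rw [hbdef]; linarith
  set w : ℕ → ℝ := fun n => A^n * Real.Gamma ((2/θ) * n + b) * Real.Gamma (β * n + β)
    / (n.factorial : ℝ) with hwdef
  have hw : Summable w := summable_majorant hA0 hθ2 hβ0 hθβ (by rw [hbdef]; linarith) hβ0
  have hΓb1 : ∀ n : ℕ, (1:ℝ) ≤ Real.Gamma ((2/θ) * n + b) := by
    intro n
    have h2 : (2:ℝ) ≤ (2/θ) * n + b := by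
      have : (0:ℝ) ≤ (2/θ) * n := by positivity
      linarith
    calc (1:ℝ) = Real.Gamma 2 := Real.Gamma_two.symm
      _ ≤ Real.Gamma ((2/θ) * n + b) := gamma_mono le_rfl h2
  -- bound on J
  have hJb : ∀ n : ℕ, J n ≤ (C * D + 1) * (A^n * Real.Gamma ((2/θ) * n + b)) := by
    intro n
    set mn : ℕ := ⌈(((2*n+2:ℕ):ℝ)+1)/θ⌉₊ with hmndef
    have harg : (0:ℝ) < (((2*n+2:ℕ):ℝ)+1)/θ := by positivity
    have hmn1 : 1 ≤ mn := by
      rw [hmndef]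
      exact Nat.one_le_iff_ne_zero.2 (Nat.pos_iff_ne_zero.1 (Nat.ceil_pos.2 harg))
    have hmnle : (mn : ℝ) ≤ (((2*n+2:ℕ):ℝ)+1)/θ + 1 :=
      le_of_lt (Nat.ceil_lt_add_one harg.le)
    have hexp_eq : (((2*n+2:ℕ):ℝ)+1)/θ = (2/θ) * n + 3/θ := by
      push_cast; field_simp; ring
    have hfact : (mn.factorial : ℝ) ≤ Real.Gamma ((2/θ) * n + b) := by
      have e1 : (mn.factorial : ℝ) = Real.Gamma (mn + 1) := (Real.Gamma_nat_eq_factorial mn).symm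
      rw [e1]
      apply gamma_mono
      · have : (1:ℝ) ≤ (mn:ℝ) := by exact_mod_cast hmn1
        linarith
      · rw [hbdef]
        have := hmnle
        rw [hexp_eq] at this
        linarith
    have hpow : C₂⁻¹ ^ mn ≤ A^n * D := by
      have h1 : C₂⁻¹ ^ mn ≤ M ^ mn :=
        pow_le_pow_left₀ (by positivity) (le_max_right _ _) mn
      have h2 : M ^ mn = M ^ ((mn : ℕ) : ℝ) := (Real.rpow_natCast M mn).symm
      have h3 : M ^ ((mn : ℕ) : ℝ) ≤ M ^ ((2/θ) * n + (3/θ + 1)) := by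
        apply Real.rpow_le_rpow_of_exponent_le hM1
        rw [hexp_eq] at hmnle
        linarith
      have h4 : M ^ ((2/θ) * n + (3/θ + 1)) = A^n * D := by
        rw [Real.rpow_add hM0, hAdef, hDdef, ← Real.rpow_natCast (M ^ (2/θ)) n,
          ← Real.rpow_mul hM0.le]
      calc C₂⁻¹ ^ mn ≤ M ^ mn := h1
        _ = M ^ ((mn : ℕ) : ℝ) := h2
        _ ≤ M ^ ((2/θ) * n + (3/θ + 1)) := h3
        _ = A^n * D := h4
    have hJn := (hIJ n).2
    have hCm : C * ((mn.factorial : ℝ) * C₂⁻¹ ^ mn) + 1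
        ≤ (C * D + 1) * (A^n * Real.Gamma ((2/θ) * n + b)) := by
      have hfn : (0:ℝ) ≤ (mn.factorial : ℝ) := Nat.cast_nonneg _
      have hΓnb := hΓb1 n
      have hA0n : (0:ℝ) < A^n := pow_pos hA0 n
      have h1 : (mn.factorial : ℝ) * C₂⁻¹ ^ mn
          ≤ Real.Gamma ((2/θ) * n + b) * (A^n * D) := by
        apply mul_le_mul hfact hpow (by positivity)
        linarith
      have h2 : (1:ℝ) ≤ A^n * Real.Gamma ((2/θ) * n + b) := by
        calc (1:ℝ) = 1 * 1 := (one_mul 1).symm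
          _ ≤ A^n * Real.Gamma ((2/θ) * n + b) :=
              mul_le_mul (one_le_pow₀ hA1) hΓnb one_pos.le hA0n.le
      calc C * ((mn.factorial : ℝ) * C₂⁻¹ ^ mn) + 1
          ≤ C * (Real.Gamma ((2/θ) * n + b) * (A^n * D)) + 1 := by
            have := mul_le_mul_of_nonneg_left h1 hC.le
            linarith
        _ ≤ (C * D + 1) * (A^n * Real.Gamma ((2/θ) * n + b)) := by nlinarith [h2]
    exact le_trans hJn hCm
  -- bound on c
  have hcb : ∀ n : ℕ, |c n| ≤ Real.Gamma (β * n + β) / (π * (n.factorial : ℝ)) := by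
    intro n
    have hΓβ : 0 < Real.Gamma (β * n + β) := Real.Gamma_pos_of_pos (hβn n)
    have hnf : (0:ℝ) < (n.factorial : ℝ) := by exact_mod_cast n.factorial_pos
    by_cases hΓ : Γn n = 0
    · rw [hcdef]
      simp only [hΓ, mul_zero, div_zero, abs_zero]
      positivity
    · have hrefl : |(Real.Gamma (1 - (β * n + β)))⁻¹| ≤ Real.Gamma (β * n + β) / π :=
        recip_gamma_reflect (hβn n) (by
          rw [show (1:ℝ) - (β * n + β) = 1 - β - β * n by ring]
          exact hΓ)
      rw [show (1:ℝ) - (β * n + β) = 1 - β - β * n by ring] at hrefl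
      have h2 : |(-1:ℝ)^n * ε^(2*n)| ≤ 1 := by
        rw [abs_mul, abs_pow, abs_neg, abs_one, one_pow, one_mul, abs_pow, abs_of_nonneg hε0]
        exact pow_le_one₀ hε0 hε1
      have h1 : |c n| ≤ ((n.factorial : ℝ))⁻¹ * |(Γn n)⁻¹| := by
        rw [hcdef]
        simp only []
        rw [abs_div, abs_mul ((n.factorial : ℝ)) (Γn n), abs_of_pos hnf, abs_inv, div_eq_mul_inv, mul_inv]
        exact mul_le_of_le_one_left (by positivity) h2
      calc |c n| ≤ ((n.factorial : ℝ))⁻¹ * |(Γn n)⁻¹| := h1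
        _ ≤ ((n.factorial : ℝ))⁻¹ * (Real.Gamma (β * n + β) / π) :=
            mul_le_mul_of_nonneg_left hrefl (by positivity)
        _ = Real.Gamma (β * n + β) / (π * (n.factorial : ℝ)) := by
            rw [div_eq_mul_inv, div_eq_mul_inv, mul_inv]
            ring
  -- term bound
  have htb : ∀ n : ℕ, |c n| * J n ≤ ((C * D + 1) / π) * w n := by
    intro n
    have hnf : (0:ℝ) < (n.factorial : ℝ) := by exact_mod_cast n.factorial_pos
    calc |c n| * J n
        ≤ (Real.Gamma (β * n + β) / (π * (n.factorial : ℝ)))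
          * ((C * D + 1) * (A^n * Real.Gamma ((2/θ) * n + b))) :=
          mul_le_mul (hcb n) (hJb n) (hJ0 n) (by positivity)
      _ = ((C * D + 1) / π) * w n := by
          rw [hwdef]
          simp only []
          field_simp
  have hwsum : Summable (fun n => ((C * D + 1) / π) * w n) := hw.mul_left _
  -- integrability of g n
  have hgint : ∀ n : ℕ, Integrable (g n) (volume.restrict (Set.Ioi 0)) := by
    intro n
    rw [hgdef]
    simp only [hhdef]
    exact ((hIJ n).1).const_mul (c n)
  -- norm integral computation
  have hnormint : ∀ n : ℕ, (∫ y in Set.Ioi (0:ℝ), ‖g n y‖) = |c n| * J n := by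
    intro n
    have e : ∀ y ∈ Set.Ioi (0:ℝ), ‖g n y‖ = |c n| * h n y := by
      intro y hy
      rw [hgdef]
      simp only []
      rw [Real.norm_eq_abs, abs_mul, abs_of_nonneg
        (mul_nonneg (Real.rpow_nonneg (le_of_lt hy) _) (hF0 y))]
    rw [setIntegral_congr_fun measurableSet_Ioi e, integral_const_mul]
  have hsumnorm : Summable (fun n : ℕ => ∫ y in Set.Ioi (0:ℝ), ‖g n y‖) := by
    apply Summable.of_nonneg_of_le
      (fun n => integral_nonneg (fun y => norm_nonneg _))
      (fun n => by rw [hnormint n]; exact htb n) hwsum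
  -- interchange
  have key : (∑' n : ℕ, ∫ y in Set.Ioi (0:ℝ), g n y)
      = ∫ y in Set.Ioi (0:ℝ), ∑' n : ℕ, g n y :=
    integral_tsum_of_summable_integral_norm hgint hsumnorm
  -- pointwise series identity
  have hpw : ∀ y ∈ Set.Ioi (0:ℝ), F y * Mβ (ε^2 / y^2) * y ^ (-3:ℝ) = ∑' n : ℕ, g n y := by
    intro y hy
    have hy0 : (0:ℝ) < y := hy
    have hx : (0:ℝ) ≤ ε^2 / y^2 := by positivity
    rw [hMβ _ hx]
    rw [← tsum_mul_left, ← tsum_mul_right]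
    apply tsum_congr
    intro n
    have e1 : (-(ε^2/y^2))^n = (-1:ℝ)^n * (ε^(2*n) / y^(2*n)) := by
      rw [neg_pow, div_pow, ← pow_mul, ← pow_mul]
    have e2 : (y^(2*n) : ℝ)⁻¹ * y ^ (-3:ℝ) = y ^ (-((2*n+2:ℕ):ℝ) - 1) := by
      rw [← Real.rpow_natCast y (2*n), ← Real.rpow_neg hy0.le, ← Real.rpow_add hy0]
      congr 1
      push_cast
      ring
    rw [hgdef, hhdef, hcdef]
    simp only []
    rw [e1, ← e2]
    ring
  -- rewrite the integral
  have hint_eq : (∫ y in Set.Ioi (0:ℝ), F y * Mβ (ε^2 / y^2) * y ^ (-3:ℝ))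
      = ∑' n : ℕ, c n * J n := by
    rw [setIntegral_congr_fun measurableSet_Ioi hpw, ← key]
    apply tsum_congr
    intro n
    rw [hgdef]
    simp only []
    rw [integral_const_mul]
  -- term identity with η
  have hterm : ∀ n : ℕ, ε^2 * (c n * J n)
      = (-1:ℝ)^n * η (2*n+2) * ε^(2*n+2)
        / (((2*n+2:ℕ):ℝ) * (n.factorial : ℝ) * Γn n) := by
    intro n
    have hηn : η (2*n+2) = ((2*n+2:ℕ):ℝ) * J n := hη (2*n+2)
    have hk0 : ((2*n+2:ℕ):ℝ) ≠ 0 := by positivity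
    have hnf : ((n.factorial : ℝ)) ≠ 0 := by
      have : (0:ℝ) < (n.factorial : ℝ) := by exact_mod_cast n.factorial_pos
      linarith
    rw [hηn, hcdef]
    simp only []
    by_cases hΓ : Γn n = 0
    · rw [hΓ]
      simp
    · field_simp
      ring
  refine ⟨?_, ?_⟩
  · rw [hint_eq, mul_assoc, ← tsum_mul_left]
    exact congrArg (fun z => 2 * z) (tsum_congr (fun n => hterm n))
  · apply Summable.of_nonneg_of_le (fun n => abs_nonneg _) _ hwsum
    intro n
    have hε2 : ε^2 ≤ 1 := pow_le_one₀ hε0 hε1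
    rw [← hterm n]
    rw [abs_mul, abs_mul, abs_of_nonneg (hJ0 n), abs_of_nonneg (sq_nonneg ε)]
    calc ε^2 * (|c n| * J n) ≤ 1 * (|c n| * J n) :=
          mul_le_mul_of_nonneg_right hε2 (mul_nonneg (abs_nonneg _) (hJ0 n))
      _ = |c n| * J n := one_mul _
      _ ≤ ((C * D + 1) / π) * w n := htb n
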